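/- Let p be a prime number, let d ≥ 2 be an integer not divisible by p, and let m ≥ 2 be an integer. For a family (n_{ij}) of rational numbers indexed by 0 ≤ i ≤ p−2 and 0 ≤ j ≤ d−2, the following are equivalent: (a) ∑_{i=0}^{p−2} ∑_{j=0}^{d−2} n_{ij} ζ_p^{i a} ζ_d^{j b} = 0 for all integers a, b with 1 ≤ a ≤ p−1, 1 ≤ b ≤ d−1 and a/p + b/d < 1 − 1/m; (b) for every i with 0 ≤ i ≤ p−2, ∑_{j=0}^{d−2} n_{ij} ζ_d^{j b} = 0 for all integers b with 1 ≤ b ≤ d−1 and b/d < 1 − 1/m − 1/p. -/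

import Mathlib

open scoped BigOperators

open IntermediateField Polynomial

/-- The standard primitive `d`-th root of unity `exp(2πi/d)`. -/
noncomputable def zeta (d : ℕ) : ℂ := Complex.exp (2 * Real.pi * Complex.I / d)

lemma zeta_isPrimitiveRoot {d : ℕ} (hd : d ≠ 0) : IsPrimitiveRoot (zeta d) d :=
  Complex.isPrimitiveRoot_exp d hd

lemma zeta_mul_pow_left {p d : ℕ} (hp : p ≠ 0) (hd : d ≠ 0) : zeta (p*d) ^ d = zeta p := by
  rw [zeta, zeta, ← Complex.exp_nat_mul]
  congr 1
  have hp' : (p:ℂ) ≠ 0 := Nat.cast_ne_zero.2 hp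
  have hd' : (d:ℂ) ≠ 0 := Nat.cast_ne_zero.2 hd
  push_cast
  field_simp

lemma zeta_mul_pow_right {p d : ℕ} (hp : p ≠ 0) (hd : d ≠ 0) : zeta (p*d) ^ p = zeta d := by
  rw [mul_comm]; exact zeta_mul_pow_left hd hp

lemma finrank_adjoin_zeta {d : ℕ} (hd : d ≠ 0) :
    Module.finrank ℚ ℚ⟮zeta d⟯ = d.totient := by
  have hζ := zeta_isPrimitiveRoot hd
  have hint : IsIntegral ℚ (zeta d) := ⟨X ^ d - 1, monic_X_pow_sub_C 1 hd, by
    simp [sub_eq_zero, hζ.pow_eq_one]⟩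
  rw [adjoin.finrank hint, ← cyclotomic_eq_minpoly_rat hζ (Nat.pos_of_ne_zero hd),
    natDegree_cyclotomic]

lemma key_minpoly {p d : ℕ} (hp : p.Prime) (hd : 2 ≤ d) (hpd : ¬ p ∣ d) :
    (minpoly ℚ⟮zeta d⟯ (zeta p)).natDegree = p - 1 := by
  have hp0 : p ≠ 0 := hp.ne_zero
  have hd0 : d ≠ 0 := by omega
  have hpd0 : p * d ≠ 0 := by positivity
  have hco : Nat.Coprime p d := (hp.coprime_iff_not_dvd).2 hpd
  set ζ := zeta p with hζdef
  set η := zeta d with hηdef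
  set μ := zeta (p*d) with hμdef
  have hμζ : μ ^ d = ζ := zeta_mul_pow_left hp0 hd0
  have hμη : μ ^ p = η := zeta_mul_pow_right hp0 hd0
  have hμint : IsIntegral ℚ μ := ⟨X ^ (p*d) - 1, monic_X_pow_sub_C 1 hpd0, by
    simp [sub_eq_zero, hμdef, (zeta_isPrimitiveRoot hpd0).pow_eq_one]⟩
  have hζint : IsIntegral ℚ ζ := ⟨X ^ p - 1, monic_X_pow_sub_C 1 hp0, by
    simp [sub_eq_zero, hζdef, (zeta_isPrimitiveRoot hp0).pow_eq_one]⟩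
  have hζintK : IsIntegral ℚ⟮η⟯ ζ := hζint.tower_top
  -- the field equality
  have heq : IntermediateField.restrictScalars ℚ (ℚ⟮η⟯⟮ζ⟯) = ℚ⟮μ⟯ := by
    erw [restrictScalars_adjoin]
    apply le_antisymm
    · rw [adjoin_le_iff]
      rintro x (hx | rfl)
      · have : (ℚ⟮η⟯ : IntermediateField ℚ ℂ) ≤ ℚ⟮μ⟯ := by
          rw [adjoin_le_iff]
          rintro y rfl
          exact hμη ▸ pow_mem (mem_adjoin_simple_self ℚ μ) p
        exact this hx
      · exact hμζ ▸ pow_mem (mem_adjoin_simple_self ℚ μ) d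
    · rw [adjoin_le_iff]
      rintro x rfl
      -- μ ∈ adjoin ℚ (ℚ⟮η⟯ ∪ {ζ})
      have hη' : η ∈ adjoin ℚ ((ℚ⟮η⟯ : Set ℂ) ∪ {ζ}) :=
        subset_adjoin ℚ _ (Or.inl (mem_adjoin_simple_self ℚ η))
      have hζ' : ζ ∈ adjoin ℚ ((ℚ⟮η⟯ : Set ℂ) ∪ {ζ}) :=
        subset_adjoin ℚ _ (Or.inr rfl)
      obtain ⟨u, v, huv⟩ : IsCoprime (p : ℤ) (d : ℤ) := by
        rw [Int.isCoprime_iff_gcd_eq_one]; exact_mod_cast hco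
      have hμ0 : μ ≠ 0 := (zeta_isPrimitiveRoot hpd0).ne_zero hpd0
      have : μ = η ^ u * ζ ^ v := by
        rw [← hμη, ← hμζ, ← zpow_natCast μ p, ← zpow_natCast μ d, ← zpow_mul, ← zpow_mul,
          ← zpow_add₀ hμ0]
        rw [show (p : ℤ) * u + (d : ℤ) * v = 1 by linarith [huv]]
        simp
      rw [this]
      exact mul_mem (zpow_mem hη' u) (zpow_mem hζ' v)
  -- finrank computations
  have g1 : Module.finrank ℚ ℚ⟮μ⟯ = (p*d).totient := finrank_adjoin_zeta hpd0
  have g2 : Module.finrank ℚ ℚ⟮η⟯ = d.totient := finrank_adjoin_zeta hd0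
  have g3 : Module.finrank ℚ⟮η⟯ (ℚ⟮η⟯⟮ζ⟯) = (minpoly ℚ⟮η⟯ ζ).natDegree :=
    adjoin.finrank hζintK
  haveI : FiniteDimensional ℚ ℚ⟮η⟯ := adjoin.finiteDimensional (by
    exact ⟨X ^ d - 1, monic_X_pow_sub_C 1 hd0, by
      simp [sub_eq_zero, hηdef, (zeta_isPrimitiveRoot hd0).pow_eq_one]⟩)
  haveI : FiniteDimensional ℚ⟮η⟯ (ℚ⟮η⟯⟮ζ⟯) := adjoin.finiteDimensional hζintK
  have tower : Module.finrank ℚ ℚ⟮η⟯ * Module.finrank ℚ⟮η⟯ (ℚ⟮η⟯⟮ζ⟯)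
      = Module.finrank ℚ (ℚ⟮η⟯⟮ζ⟯) := Module.finrank_mul_finrank ℚ ℚ⟮η⟯ (ℚ⟮η⟯⟮ζ⟯)
  have g4 : Module.finrank ℚ (ℚ⟮η⟯⟮ζ⟯) = Module.finrank ℚ ℚ⟮μ⟯ := by
    rw [← heq]
    rfl
  have htot : (p*d).totient = (p-1) * d.totient := by
    rw [Nat.totient_mul hco, Nat.totient_prime hp]
  have hpos : 0 < d.totient := Nat.totient_pos.2 (by omega)
  have h5 : d.totient * (minpoly ℚ⟮η⟯ ζ).natDegree = d.totient * (p - 1) := by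
    calc d.totient * (minpoly ℚ⟮η⟯ ζ).natDegree
        = Module.finrank ℚ ℚ⟮η⟯ * Module.finrank ℚ⟮η⟯ (ℚ⟮η⟯⟮ζ⟯) := by rw [g2, g3]
      _ = Module.finrank ℚ ℚ⟮μ⟯ := by rw [tower, g4]
      _ = d.totient * (p - 1) := by rw [g1, htot, Nat.mul_comm]
  exact Nat.eq_of_mul_eq_mul_left hpos h5

lemma ratCast_mem_adjoin (q : ℚ) (s : Set ℂ) : (q : ℂ) ∈ IntermediateField.adjoin ℚ s := by
  have : ((q : ℚ) : ℂ) = algebraMap ℚ ℂ q := (eq_ratCast (algebraMap ℚ ℂ) q).symm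
  rw [this]
  exact IntermediateField.algebraMap_mem _ q

lemma indep {p d : ℕ} (hp : p.Prime) (hd : 2 ≤ d) (hpd : ¬ p ∣ d)
    (c : Fin (p-1) → ℂ) (hc : ∀ i, c i ∈ ℚ⟮zeta d⟯)
    (h : ∑ i : Fin (p-1), c i * zeta p ^ (i:ℕ) = 0) : ∀ i, c i = 0 := by
  have hli0 := linearIndependent_pow (K := ℚ⟮zeta d⟯) (S := ℂ) (zeta p)
  rw [key_minpoly hp hd hpd] at hli0
  have hmain := Fintype.linearIndependent_iff.mp hli0 (fun i => ⟨c i, hc i⟩) (by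
    have : ∀ i : Fin (p-1), (⟨c i, hc i⟩ : ℚ⟮zeta d⟯) • zeta p ^ (i:ℕ) = c i * zeta p ^ (i:ℕ) := by
      intro i
      rw [Algebra.smul_def]
      rfl
    simp only [this]
    exact h)
  intro i
  have := hmain i
  exact congrArg Subtype.val this

theorem stmt4 (p d m : ℕ) (hp : p.Prime) (hd : 2 ≤ d) (hpd : ¬ p ∣ d) (hm : 2 ≤ m)
    (n : Fin (p - 1) → Fin (d - 1) → ℚ) :
    (∀ a b : ℕ, 1 ≤ a → a ≤ p - 1 → 1 ≤ b → b ≤ d - 1 →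
        (a : ℚ) / p + (b : ℚ) / d < 1 - 1 / m →
        ∑ i : Fin (p - 1), ∑ j : Fin (d - 1),
          (n i j : ℂ) * zeta p ^ ((i : ℕ) * a) * zeta d ^ ((j : ℕ) * b) = 0)
    ↔ (∀ i : Fin (p - 1), ∀ b : ℕ, 1 ≤ b → b ≤ d - 1 →
        (b : ℚ) / d < 1 - 1 / m - 1 / p →
        ∑ j : Fin (d - 1), (n i j : ℂ) * zeta d ^ ((j : ℕ) * b) = 0) := by
  have hp2 : 2 ≤ p := hp.two_le
  have hp0 : (0:ℚ) < p := by positivity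
  constructor
  · intro H i b hb1 hb2 hbd
    have hcond : ((1:ℕ) : ℚ) / p + (b : ℚ) / d < 1 - 1 / m := by
      push_cast
      linarith
    have hsum := H 1 b le_rfl (by omega) hb1 hb2 hcond
    have hre : ∑ i : Fin (p-1), (∑ j : Fin (d-1), (n i j : ℂ) * zeta d ^ ((j:ℕ)*b))
        * zeta p ^ (i:ℕ) = 0 := by
      rw [← hsum]
      refine Finset.sum_congr rfl fun i _ => ?_
      rw [Finset.sum_mul]
      refine Finset.sum_congr rfl fun j _ => ?_
      rw [Nat.mul_one]
      ring
    exact indep hp hd hpd _ (fun i => sum_mem fun j _ =>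
      mul_mem (ratCast_mem_adjoin _ _)
        (pow_mem (mem_adjoin_simple_self ℚ (zeta d)) _)) hre i
  · intro H a b ha1 ha2 hb1 hb2 hab
    have hcond : (b : ℚ) / d < 1 - 1 / m - 1 / p := by
      have h1a : (1:ℚ) ≤ (a:ℚ) := by exact_mod_cast ha1
      have h2 : (1:ℚ)/p ≤ (a:ℚ)/p := by gcongr
      linarith
    refine Finset.sum_eq_zero fun i _ => ?_
    have hz := H i b hb1 hb2 hcond
    calc ∑ j : Fin (d-1), (n i j : ℂ) * zeta p ^ ((i:ℕ)*a) * zeta d ^ ((j:ℕ)*b)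
        = (∑ j : Fin (d-1), (n i j : ℂ) * zeta d ^ ((j:ℕ)*b)) * zeta p ^ ((i:ℕ)*a) := by
          rw [Finset.sum_mul]
          exact Finset.sum_congr rfl fun j _ => by ring
      _ = 0 := by rw [hz, zero_mul]
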